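/- For the discrete-time algebraic Riccati equation, the unique stabilizing solution P* is monotonically increasing in the state noise covariance Q: if Q₁ ⪯ Q₂ (Loewner order) then P*(Q₁, R) ⪯ P*(Q₂, R). -/

import Mathlib

open Matrix Filter Topology

namespace ARE9

variable {n p : ℕ}

local notation "Mat" => Matrix (Fin n) (Fin n) ℝ


lemma conj_psd {m : ℕ} {P : Matrix (Fin n) (Fin n) ℝ} (hP : P.PosSemidef)
    (B : Matrix (Fin m) (Fin n) ℝ) : (B * P * Bᵀ).PosSemidef := by
  have := hP.mul_mul_conjTranspose_same B
  have hBT : Bᴴ = Bᵀ := by ext i j; simp [conjTranspose_apply]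
  rwa [hBT] at this

lemma psd_symm {P : Matrix (Fin n) (Fin n) ℝ} (hP : P.PosSemidef) : Pᵀ = P := by
  have := hP.isHermitian
  rw [IsHermitian] at this
  have hBT : Pᴴ = Pᵀ := by ext i j; simp [conjTranspose_apply]
  rwa [hBT] at this

noncomputable def gm (C : Matrix (Fin p) (Fin n) ℝ) (R : Matrix (Fin p) (Fin p) ℝ)
    (P : Matrix (Fin n) (Fin n) ℝ) : Matrix (Fin n) (Fin n) ℝ :=
  P - P * Cᵀ * (C * P * Cᵀ + R)⁻¹ * C * P

noncomputable def Km (C : Matrix (Fin p) (Fin n) ℝ) (R : Matrix (Fin p) (Fin p) ℝ)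
    (P : Matrix (Fin n) (Fin n) ℝ) : Matrix (Fin n) (Fin p) ℝ :=
  P * Cᵀ * (C * P * Cᵀ + R)⁻¹

noncomputable def phi (C : Matrix (Fin p) (Fin n) ℝ) (R : Matrix (Fin p) (Fin p) ℝ)
    (P : Matrix (Fin n) (Fin n) ℝ) (K : Matrix (Fin n) (Fin p) ℝ) :
    Matrix (Fin n) (Fin n) ℝ :=
  (1 - K * C) * P * (1 - K * C)ᵀ + K * R * Kᵀ

section basic
variable {C : Matrix (Fin p) (Fin n) ℝ} {R : Matrix (Fin p) (Fin p) ℝ}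
  {P P' : Matrix (Fin n) (Fin n) ℝ}

lemma S_posDef (hR : R.PosDef) (hP : P.PosSemidef) : (C * P * Cᵀ + R).PosDef :=
  Matrix.PosDef.posSemidef_add (conj_psd hP C) hR

lemma phi_psd (hR : R.PosDef) (hP : P.PosSemidef) (K : Matrix (Fin n) (Fin p) ℝ) :
    (phi C R P K).PosSemidef :=
  (conj_psd hP _).add (conj_psd hR.posSemidef K)

lemma phi_expand (K : Matrix (Fin n) (Fin p) ℝ) :
    phi C R P K = P - K * (C * P) - (P * Cᵀ) * Kᵀ + K * (C * P * Cᵀ + R) * Kᵀ := by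
  unfold phi
  have h1 : (1 - K * C)ᵀ = 1 - Cᵀ * Kᵀ := by
    simp [transpose_sub, transpose_mul]
  rw [h1]
  simp only [Matrix.sub_mul, Matrix.mul_sub, Matrix.add_mul, Matrix.mul_add,
    Matrix.one_mul, Matrix.mul_one, Matrix.mul_assoc]
  abel

lemma KS (hR : R.PosDef) (hP : P.PosSemidef) :
    Km C R P * (C * P * Cᵀ + R) = P * Cᵀ := by
  unfold Km
  rw [Matrix.mul_assoc (P * Cᵀ),
    nonsing_inv_mul _ (S_posDef hR hP).det_pos.ne'.isUnit, Matrix.mul_one]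

lemma Kt (hR : R.PosDef) (hP : P.PosSemidef) :
    (Km C R P)ᵀ = (C * P * Cᵀ + R)⁻¹ * (C * P) := by
  unfold Km
  have hS : (C * P * Cᵀ + R)ᵀ = C * P * Cᵀ + R := psd_symm (S_posDef hR hP).posSemidef
  rw [transpose_mul, transpose_nonsing_inv, hS, transpose_mul, transpose_transpose,
    psd_symm hP]

lemma SKt (hR : R.PosDef) (hP : P.PosSemidef) :
    (C * P * Cᵀ + R) * (Km C R P)ᵀ = C * P := by
  rw [Kt hR hP, ← Matrix.mul_assoc,
    mul_nonsing_inv _ (S_posDef hR hP).det_pos.ne'.isUnit, Matrix.one_mul]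

lemma g_eq_K : gm C R P = P - Km C R P * (C * P) := by
  unfold gm Km
  simp only [Matrix.mul_assoc]

lemma g_eq_phi (hR : R.PosDef) (hP : P.PosSemidef) :
    gm C R P = phi C R P (Km C R P) := by
  rw [phi_expand, g_eq_K]
  have h2 : Km C R P * (C * P * Cᵀ + R) * (Km C R P)ᵀ = (P * Cᵀ) * (Km C R P)ᵀ := by
    rw [KS hR hP]
  rw [h2]; abel

lemma g_psd (hR : R.PosDef) (hP : P.PosSemidef) : (gm C R P).PosSemidef := by
  rw [g_eq_phi hR hP]; exact phi_psd hR hP _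

lemma phi_sub_g_psd (hR : R.PosDef) (hP : P.PosSemidef) (K' : Matrix (Fin n) (Fin p) ℝ) :
    (phi C R P K' - gm C R P).PosSemidef := by
  have hKS := KS (C := C) hR hP
  have hSKt := SKt (C := C) hR hP
  have key : phi C R P K' - gm C R P
      = (K' - Km C R P) * (C * P * Cᵀ + R) * (K' - Km C R P)ᵀ := by
    rw [g_eq_phi hR hP, phi_expand, phi_expand, transpose_sub]
    set S := C * P * Cᵀ + R with hSdef
    rw [← hSKt, ← hKS]
    simp only [Matrix.sub_mul, Matrix.mul_sub, Matrix.mul_assoc]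
    abel
  rw [key]
  exact conj_psd (S_posDef hR hP).posSemidef _

lemma g_mono (hR : R.PosDef) (hP : P.PosSemidef) (hP' : P'.PosSemidef)
    (h : (P' - P).PosSemidef) : (gm C R P' - gm C R P).PosSemidef := by
  set K' := Km C R P' with hK'
  have h1 : (phi C R P K' - gm C R P).PosSemidef := phi_sub_g_psd hR hP K'
  have h2 : phi C R P' K' - phi C R P K' = (1 - K' * C) * (P' - P) * (1 - K' * C)ᵀ := by
    unfold phi
    simp only [Matrix.sub_mul, Matrix.mul_sub, Matrix.mul_assoc]
    abel
  have h3 : (phi C R P' K' - phi C R P K').PosSemidef := by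
    rw [h2]; exact conj_psd h _
  have := h3.add h1
  rwa [sub_add_sub_cancel, ← g_eq_phi hR hP'] at this

end basic



lemma psd_of_tendsto {M : ℕ → Mat} {L : Mat}
    (h : ∀ k, (M k).PosSemidef) (hT : Tendsto M atTop (𝓝 L)) : L.PosSemidef := by
  refine Matrix.PosSemidef.of_dotProduct_mulVec_nonneg ?_ ?_
  · have hc : Continuous (fun X : Mat => Xᴴ) := continuous_id.matrix_conjTranspose
    have hT' : Tendsto (fun k => (M k)ᴴ) atTop (𝓝 Lᴴ) := (hc.tendsto L).comp hT
    have he : (fun k => (M k)ᴴ) = M := funext fun k => (h k).1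
    rw [he] at hT'
    exact tendsto_nhds_unique hT' hT
  · intro x
    have hc : Continuous fun X : Mat => star x ⬝ᵥ X *ᵥ x := by
      simp only [dotProduct, mulVec]
      refine continuous_finset_sum _ fun i _ => Continuous.mul continuous_const ?_
      exact continuous_finset_sum _ fun j _ => (continuous_id.matrix_elem i j).mul continuous_const
    have hq : Tendsto (fun k => star x ⬝ᵥ (M k) *ᵥ x) atTop (𝓝 (star x ⬝ᵥ L *ᵥ x)) :=
      (hc.tendsto L).comp hT
    exact ge_of_tendsto' hq fun k => (h k).dotProduct_mulVec_nonneg x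


lemma entry_eq_quad {M : Mat} (hsym : Mᵀ = M) (i j : Fin n) :
    M i j = ((Pi.single i 1 + Pi.single j 1) ⬝ᵥ M *ᵥ (Pi.single i 1 + Pi.single j 1)
      - Pi.single i 1 ⬝ᵥ M *ᵥ Pi.single i 1 - Pi.single j 1 ⬝ᵥ M *ᵥ Pi.single j 1) / 2 := by
  have hji : M j i = M i j := by
    conv_lhs => rw [← hsym]
    simp [transpose_apply]
  simp only [dotProduct_add, add_dotProduct, mulVec_add, mulVec_single, single_dotProduct,
    mul_one, one_mul]
  simp [hji]
  ring

lemma exists_lim_of_antitone_psd {M : ℕ → Mat}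
    (hpsd : ∀ k, (M k).PosSemidef) (hdec : ∀ k, (M k - M (k + 1)).PosSemidef) :
    ∃ L : Mat, Tendsto M atTop (𝓝 L) := by
  have key : ∀ x : Fin n → ℝ,
      Tendsto (fun k => x ⬝ᵥ (M k) *ᵥ x) atTop (𝓝 (⨅ k, x ⬝ᵥ (M k) *ᵥ x)) := by
    intro x
    refine tendsto_atTop_ciInf (antitone_nat_of_succ_le fun k => ?_) ⟨0, ?_⟩
    · have h0 := (hdec k).dotProduct_mulVec_nonneg x
      simp only [star_trivial, sub_mulVec, dotProduct_sub, sub_nonneg] at h0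
      exact h0
    · rintro y ⟨k, rfl⟩
      simpa [star_trivial] using (hpsd k).dotProduct_mulVec_nonneg x
  set q : (Fin n → ℝ) → ℝ := fun x => ⨅ k, x ⬝ᵥ (M k) *ᵥ x with hq
  refine ⟨fun i j => (q (Pi.single i 1 + Pi.single j 1) - q (Pi.single i 1)
      - q (Pi.single j 1)) / 2, ?_⟩
  refine tendsto_pi_nhds.mpr ?_
  intro i
  refine tendsto_pi_nhds.mpr ?_
  intro j
  have hsym : ∀ k, (M k)ᵀ = M k := by
    intro k
    have := (hpsd k).1
    rw [IsHermitian] at this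
    have hBT : (M k)ᴴ = (M k)ᵀ := by ext a b; simp [conjTranspose_apply]
    rwa [hBT] at this
  have he : (fun k => M k i j) = fun k =>
      ((Pi.single i 1 + Pi.single j 1) ⬝ᵥ (M k) *ᵥ (Pi.single i 1 + Pi.single j 1)
        - Pi.single i 1 ⬝ᵥ (M k) *ᵥ Pi.single i 1
        - Pi.single j 1 ⬝ᵥ (M k) *ᵥ Pi.single j 1) / 2 :=
    funext fun k => entry_eq_quad (hsym k) i j
  rw [he]
  exact (((key _).sub (key _)).sub (key _)).div_const 2

lemma _root_.ContinuousAt.mmul {X : Type*} [TopologicalSpace X] {a b c : ℕ}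
    {f : X → Matrix (Fin a) (Fin b) ℝ} {g : X → Matrix (Fin b) (Fin c) ℝ} {x : X}
    (hf : ContinuousAt f x) (hg : ContinuousAt g x) :
    ContinuousAt (fun y => f y * g y) x := by
  have h : Continuous (fun q : Matrix (Fin a) (Fin b) ℝ × Matrix (Fin b) (Fin c) ℝ =>
      q.1 * q.2) := continuous_fst.matrix_mul continuous_snd
  exact h.continuousAt.comp (hf.prodMk hg)

lemma continuousAt_ric {p : ℕ} (A : Mat) (C : Matrix (Fin p) (Fin n) ℝ)
    (R : Matrix (Fin p) (Fin p) ℝ) (Q : Mat) (L : Mat)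
    (hdet : (C * L * Cᵀ + R).det ≠ 0) :
    ContinuousAt (fun P : Mat =>
      A * (P - P * Cᵀ * (C * P * Cᵀ + R)⁻¹ * C * P) * Aᵀ + Q) L := by
  have hS : ContinuousAt (fun P : Mat => C * P * Cᵀ + R) L :=
    (((continuous_const.matrix_mul continuous_id).matrix_mul
      continuous_const).add continuous_const).continuousAt
  have hinv : ContinuousAt (fun P : Mat => (C * P * Cᵀ + R)⁻¹) L := by
    have h1 : ContinuousAt Ring.inverse (C * L * Cᵀ + R).det := by
      rw [Ring.inverse_eq_inv']
      exact continuousAt_inv₀ hdet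
    exact ContinuousAt.comp (x := L) (f := fun P : Mat => C * P * Cᵀ + R)
      (continuousAt_matrix_inv _ h1) hS
  have hid : ContinuousAt (fun P : Mat => P) L := continuousAt_id
  have hconst : ∀ {a b : ℕ} (B : Matrix (Fin a) (Fin b) ℝ),
      ContinuousAt (fun _ : Mat => B) L := fun _ => continuousAt_const
  have hg : ContinuousAt (fun P : Mat =>
      P - P * Cᵀ * (C * P * Cᵀ + R)⁻¹ * C * P) L :=
    hid.sub ((((hid.mmul (hconst Cᵀ)).mmul hinv).mmul (hconst C)).mmul hid)
  exact (((hconst A).mmul hg).mmul (hconst Aᵀ)).add (hconst Q)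

noncomputable def iter (A : Matrix (Fin n) (Fin n) ℝ) (C : Matrix (Fin p) (Fin n) ℝ)
    (R : Matrix (Fin p) (Fin p) ℝ) (Q P0 : Matrix (Fin n) (Fin n) ℝ) :
    ℕ → Matrix (Fin n) (Fin n) ℝ
  | 0 => P0
  | k + 1 => A * gm C R (iter A C R Q P0 k) * Aᵀ + Q

end ARE9

open ARE9 in
theorem are_monotone_in_Q {n p : ℕ}
    (A : Matrix (Fin n) (Fin n) ℝ) (C : Matrix (Fin p) (Fin n) ℝ)
    (R : Matrix (Fin p) (Fin p) ℝ) (Q₁ Q₂ : Matrix (Fin n) (Fin n) ℝ)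
    (hR : R.PosDef) (hQ₁ : Q₁.PosDef) (hQ₂ : Q₂.PosDef)
    (hQ : (Q₂ - Q₁).PosSemidef)
    (P₁ P₂ : Matrix (Fin n) (Fin n) ℝ)
    (hP₁ : P₁.PosSemidef) (hP₂ : P₂.PosSemidef)
    (heq₁ : P₁ = A * (P₁ - P₁ * Cᵀ * (C * P₁ * Cᵀ + R)⁻¹ * C * P₁) * Aᵀ + Q₁)
    (heq₂ : P₂ = A * (P₂ - P₂ * Cᵀ * (C * P₂ * Cᵀ + R)⁻¹ * C * P₂) * Aᵀ + Q₂)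
    (huniq₁ : ∀ P : Matrix (Fin n) (Fin n) ℝ, P.PosSemidef →
      P = A * (P - P * Cᵀ * (C * P * Cᵀ + R)⁻¹ * C * P) * Aᵀ + Q₁ → P = P₁)
    (huniq₂ : ∀ P : Matrix (Fin n) (Fin n) ℝ, P.PosSemidef →
      P = A * (P - P * Cᵀ * (C * P * Cᵀ + R)⁻¹ * C * P) * Aᵀ + Q₂ → P = P₂) :
    (P₂ - P₁).PosSemidef := by
  -- the decreasing Riccati iteration started at `P₂` with noise `Q₁`
  set M : ℕ → Matrix (Fin n) (Fin n) ℝ := iter A C R Q₁ P₂ with hM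
  have hM0 : M 0 = P₂ := rfl
  have hMs : ∀ k, M (k + 1) = A * gm C R (M k) * Aᵀ + Q₁ := fun k => rfl
  have heq₂' : P₂ = A * gm C R P₂ * Aᵀ + Q₂ := heq₂
  -- each iterate is PSD
  have hpsd : ∀ k, (M k).PosSemidef := by
    intro k
    induction k with
    | zero => exact hP₂
    | succ k ih =>
      rw [hMs k]
      exact (conj_psd (g_psd hR ih) A).add hQ₁.posSemidef
  -- the iterates decrease
  have hdec : ∀ k, (M k - M (k + 1)).PosSemidef := by
    intro k
    induction k with
    | zero =>
      have : M 0 - M 1 = Q₂ - Q₁ := by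
        rw [hM0, hMs 0, hM0]
        nth_rewrite 1 [heq₂']
        abel
      rw [this]; exact hQ
    | succ k ih =>
      have : M (k + 1) - M (k + 2) = A * (gm C R (M k) - gm C R (M (k + 1))) * Aᵀ := by
        rw [hMs k, hMs (k + 1), Matrix.mul_sub, Matrix.sub_mul]
        abel
      rw [this]
      exact conj_psd (g_mono hR (hpsd (k + 1)) (hpsd k) ih) A
  -- they stay below `P₂`
  have hbd : ∀ k, (P₂ - M k).PosSemidef := by
    intro k
    induction k with
    | zero => rw [hM0, sub_self]; exact Matrix.PosSemidef.zero
    | succ k ih =>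
      have := ih.add (hdec k)
      rwa [sub_add_sub_cancel] at this
  -- extract the limit
  obtain ⟨L, hL⟩ := exists_lim_of_antitone_psd hpsd hdec
  have hLpsd : L.PosSemidef := psd_of_tendsto hpsd hL
  have hP₂L : (P₂ - L).PosSemidef :=
    psd_of_tendsto (fun k => hbd k) (hL.const_sub P₂)
  -- the limit is a fixed point of the `Q₁`-Riccati map
  have hdet : (C * L * Cᵀ + R).det ≠ 0 := (S_posDef hR hLpsd).det_pos.ne'
  have hFc := continuousAt_ric A C R Q₁ L hdet
  have h1 : Tendsto (fun k => M (k + 1)) atTop (𝓝 L) :=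
    hL.comp (tendsto_add_atTop_nat 1)
  have h2 : Tendsto (fun k => A * (M k - M k * Cᵀ * (C * (M k) * Cᵀ + R)⁻¹ * C * M k) * Aᵀ + Q₁)
      atTop (𝓝 (A * (L - L * Cᵀ * (C * L * Cᵀ + R)⁻¹ * C * L) * Aᵀ + Q₁)) :=
    hFc.tendsto.comp hL
  have h3 : (fun k => M (k + 1))
      = fun k => A * (M k - M k * Cᵀ * (C * (M k) * Cᵀ + R)⁻¹ * C * M k) * Aᵀ + Q₁ := by
    funext k; exact hMs k
  rw [h3] at h1
  have hfix : L = A * (L - L * Cᵀ * (C * L * Cᵀ + R)⁻¹ * C * L) * Aᵀ + Q₁ :=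
    tendsto_nhds_unique h1 h2
  have hL₁ : L = P₁ := huniq₁ L hLpsd hfix
  rwa [hL₁] at hP₂L
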